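/- Let σ₁, σ₂ > 0, let 0 < r < 1 and 0 ≤ ρ ≤ r, let n₁, n₂ be positive integers, let c₁, …, c_{n₁−1} and d₁, …, d_{n₂−1} be real numbers, and let Δ₁, …, Δ_{n₁−1} ≥ 0 and Δ'₁, …, Δ'_{n₂−1} ≥ 0. Define I(ρ) := Σ_{i=1}^{n₁−1} Σ_{j=1}^{n₂−1} Δᵢ Δ'ⱼ ∫₀^{ρ} (2π√(1−y²))⁻¹ · exp( −(1/(2(1−y²)))( cᵢ²/σ₁² − 2y cᵢ dⱼ/(σ₁σ₂) + dⱼ²/σ₂² ) ) dy. Then (arcsin(ρ)/(2π)) · Σᵢ Σⱼ Δᵢ Δ'ⱼ exp( −(1/(2(1−r²)))( cᵢ²/σ₁² + dⱼ²/σ₂² + 2r|cᵢ dⱼ|/(σ₁σ₂) ) ) ≤ I(ρ) ≤ (arcsin(ρ)/(2π)) · Σᵢ Σⱼ Δᵢ Δ'ⱼ exp( −(1/2)( cᵢ²/σ₁² + dⱼ²/σ₂² ) + (r/(1−r²)) |cᵢ dⱼ|/(σ₁σ₂) ). -/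

import Mathlib

open Real


lemma int_arcsin (ρ : ℝ) (hρ0 : 0 ≤ ρ) (hρ1 : ρ < 1) :
    ∫ y in (0:ℝ)..ρ, (Real.sqrt (1 - y ^ 2))⁻¹ = Real.arcsin ρ := by
  have h : ∀ y ∈ Set.uIcc (0:ℝ) ρ, HasDerivAt Real.arcsin ((Real.sqrt (1 - y ^ 2))⁻¹) y := by
    intro y hy
    rw [Set.uIcc_of_le hρ0] at hy
    have h1 : y ≠ -1 := by intro h; linarith [hy.1]
    have h2 : y ≠ 1 := by intro h; rw [h] at hy; linarith [hy.2]
    simpa [one_div] using Real.hasDerivAt_arcsin h1 h2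
  have hcont : ContinuousOn (fun y : ℝ => (Real.sqrt (1 - y ^ 2))⁻¹) (Set.uIcc 0 ρ) := by
    apply ContinuousOn.inv₀
    · exact (Real.continuous_sqrt.comp (by continuity)).continuousOn
    · intro y hy
      rw [Set.uIcc_of_le hρ0] at hy
      have : 0 < 1 - y ^ 2 := by nlinarith [hy.1, hy.2]
      positivity
  have := intervalIntegral.integral_eq_sub_of_hasDerivAt h (hcont.intervalIntegrable)
  simpa [Real.arcsin_zero] using this

lemma ptwise_lower (r y A A' b : ℝ) (hr1 : r < 1) (hy0 : 0 ≤ y) (hyr : y ≤ r)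
    (hA : 0 ≤ A) (hA' : 0 ≤ A') (hAM : 2 * |b| ≤ A + A') :
    -(1 / (2 * (1 - r ^ 2))) * (A + A' + 2 * r * |b|) ≤
      -(1 / (2 * (1 - y ^ 2))) * (A - 2 * y * b + A') := by
  have hr0' : 0 ≤ r := le_trans hy0 hyr
  have hq : 0 < 1 - r ^ 2 := by nlinarith
  have hp : 0 < 1 - y ^ 2 := by nlinarith
  have hqp : 1 - r ^ 2 ≤ 1 - y ^ 2 := by nlinarith
  have hb0 := abs_nonneg b
  have hb1 := le_abs_self b
  have hb2 := neg_abs_le b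
  have hu : 0 ≤ A - 2 * y * b + A' := by nlinarith
  have hv : A - 2 * y * b + A' ≤ A + A' + 2 * r * |b| := by nlinarith
  have hv' : 0 ≤ A + A' + 2 * r * |b| := le_trans hu hv
  rw [neg_mul, neg_mul, neg_le_neg_iff,
    show (1 : ℝ) / (2 * (1 - y ^ 2)) * (A - 2 * y * b + A')
      = (A - 2 * y * b + A') / (2 * (1 - y ^ 2)) from by ring,
    show (1 : ℝ) / (2 * (1 - r ^ 2)) * (A + A' + 2 * r * |b|)
      = (A + A' + 2 * r * |b|) / (2 * (1 - r ^ 2)) from by ring,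
    div_le_div_iff₀ (by positivity) (by positivity)]
  nlinarith [mul_le_mul_of_nonneg_right hv hq.le, mul_le_mul_of_nonneg_left hqp hv']

lemma ptwise_upper (r y A A' b : ℝ) (hr1 : r < 1) (hy0 : 0 ≤ y) (hyr : y ≤ r)
    (hA : 0 ≤ A) (hA' : 0 ≤ A') :
    -(1 / (2 * (1 - y ^ 2))) * (A - 2 * y * b + A') ≤
      -(1 / 2) * (A + A') + (r / (1 - r ^ 2)) * |b| := by
  have hr0' : 0 ≤ r := le_trans hy0 hyr
  have hq : 0 < 1 - r ^ 2 := by nlinarith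
  have hp : 0 < 1 - y ^ 2 := by nlinarith
  have e : -(1 / (2 * (1 - y ^ 2))) * (A - 2 * y * b + A')
      = -((A + A') / (2 * (1 - y ^ 2))) + (y / (1 - y ^ 2)) * b := by
    field_simp
    ring
  rw [e]
  have i1 : (A + A') / 2 ≤ (A + A') / (2 * (1 - y ^ 2)) := by
    gcongr
    nlinarith [sq_nonneg y]
  have i2 : (y / (1 - y ^ 2)) * b ≤ (r / (1 - r ^ 2)) * |b| := by
    calc (y / (1 - y ^ 2)) * b ≤ (y / (1 - y ^ 2)) * |b| :=
          mul_le_mul_of_nonneg_left (le_abs_self b) (by positivity)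
      _ ≤ (r / (1 - r ^ 2)) * |b| := by
          apply mul_le_mul_of_nonneg_right _ (abs_nonneg b)
          rw [div_le_div_iff₀ hp hq]
          nlinarith [mul_nonneg (mul_nonneg hr0' hy0) (sub_nonneg.2 hyr)]
  linarith

lemma pair_bound (σ₁ σ₂ r ρ cc dd : ℝ) (hσ₁ : 0 < σ₁) (hσ₂ : 0 < σ₂)
    (hr0 : 0 < r) (hr1 : r < 1) (hρ0 : 0 ≤ ρ) (hρr : ρ ≤ r) :
    Real.arcsin ρ / (2 * Real.pi) *
        Real.exp (-(1 / (2 * (1 - r ^ 2))) *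
          (cc ^ 2 / σ₁ ^ 2 + dd ^ 2 / σ₂ ^ 2 + 2 * r * |cc * dd| / (σ₁ * σ₂))) ≤
      (∫ y in (0:ℝ)..ρ, (2 * Real.pi * Real.sqrt (1 - y ^ 2))⁻¹ *
          Real.exp (-(1 / (2 * (1 - y ^ 2))) *
            (cc ^ 2 / σ₁ ^ 2 - 2 * y * cc * dd / (σ₁ * σ₂) + dd ^ 2 / σ₂ ^ 2))) ∧
      (∫ y in (0:ℝ)..ρ, (2 * Real.pi * Real.sqrt (1 - y ^ 2))⁻¹ *
          Real.exp (-(1 / (2 * (1 - y ^ 2))) *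
            (cc ^ 2 / σ₁ ^ 2 - 2 * y * cc * dd / (σ₁ * σ₂) + dd ^ 2 / σ₂ ^ 2))) ≤
      Real.arcsin ρ / (2 * Real.pi) *
        Real.exp (-(1 / 2) * (cc ^ 2 / σ₁ ^ 2 + dd ^ 2 / σ₂ ^ 2) +
          (r / (1 - r ^ 2)) * |cc * dd| / (σ₁ * σ₂)) := by
  have hρ1 : ρ < 1 := lt_of_le_of_lt hρr hr1
  have hA : 0 ≤ cc ^ 2 / σ₁ ^ 2 := by positivity
  have hA' : 0 ≤ dd ^ 2 / σ₂ ^ 2 := by positivity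
  have habs : |cc * dd / (σ₁ * σ₂)| = |cc * dd| / (σ₁ * σ₂) := by
    rw [abs_div, abs_of_pos (mul_pos hσ₁ hσ₂)]
  have eA : cc ^ 2 / σ₁ ^ 2 = (|cc| / σ₁) ^ 2 := by rw [div_pow, sq_abs]
  have eA' : dd ^ 2 / σ₂ ^ 2 = (|dd| / σ₂) ^ 2 := by rw [div_pow, sq_abs]
  have eb : |cc * dd / (σ₁ * σ₂)| = (|cc| / σ₁) * (|dd| / σ₂) := by
    rw [habs, abs_mul, div_mul_div_comm]
  have hAM : 2 * |cc * dd / (σ₁ * σ₂)| ≤ cc ^ 2 / σ₁ ^ 2 + dd ^ 2 / σ₂ ^ 2 := by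
    rw [eA, eA', eb]
    nlinarith [sq_nonneg (|cc| / σ₁ - |dd| / σ₂)]
  -- constant integral
  have hconst : ∀ K : ℝ,
      (∫ y in (0:ℝ)..ρ, (2 * Real.pi * Real.sqrt (1 - y ^ 2))⁻¹ * K)
        = Real.arcsin ρ / (2 * Real.pi) * K := by
    intro K
    have e : ∀ y : ℝ, (2 * Real.pi * Real.sqrt (1 - y ^ 2))⁻¹ * K
        = ((2 * Real.pi)⁻¹ * K) * (Real.sqrt (1 - y ^ 2))⁻¹ := by
      intro y; rw [mul_inv]; ring
    simp only [e]
    rw [intervalIntegral.integral_const_mul, int_arcsin ρ hρ0 hρ1]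
    ring
  have hy2 : ∀ y ∈ Set.uIcc (0:ℝ) ρ, 0 < 1 - y ^ 2 := by
    intro y hy
    rw [Set.uIcc_of_le hρ0] at hy
    nlinarith [hy.1, hy.2]
  have hc1 : ContinuousOn (fun y : ℝ => (2 * Real.pi * Real.sqrt (1 - y ^ 2))⁻¹)
      (Set.uIcc 0 ρ) := by
    apply ContinuousOn.inv₀
    · exact (by fun_prop : Continuous fun y : ℝ => 2 * Real.pi * Real.sqrt (1 - y ^ 2)).continuousOn
    · intro y hy
      have := hy2 y hy
      have : 0 < Real.sqrt (1 - y ^ 2) := Real.sqrt_pos.2 this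
      positivity
  have hcF : ContinuousOn (fun y : ℝ => (2 * Real.pi * Real.sqrt (1 - y ^ 2))⁻¹ *
      Real.exp (-(1 / (2 * (1 - y ^ 2))) *
        (cc ^ 2 / σ₁ ^ 2 - 2 * y * cc * dd / (σ₁ * σ₂) + dd ^ 2 / σ₂ ^ 2)))
      (Set.uIcc 0 ρ) := by
    apply hc1.mul
    apply ContinuousOn.rexp
    apply ContinuousOn.mul
    · apply ContinuousOn.neg
      apply ContinuousOn.div continuousOn_const
      · exact (by fun_prop : Continuous fun y : ℝ => 2 * (1 - y ^ 2)).continuousOn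
      · intro y hy
        have := hy2 y hy
        positivity
    · apply Continuous.continuousOn
      fun_prop
  have hcK : ∀ K : ℝ, ContinuousOn
      (fun y : ℝ => (2 * Real.pi * Real.sqrt (1 - y ^ 2))⁻¹ * K) (Set.uIcc 0 ρ) :=
    fun K => hc1.mul continuousOn_const
  constructor
  · rw [← hconst]
    apply intervalIntegral.integral_mono_on hρ0
      ((hcK _).intervalIntegrable) (hcF.intervalIntegrable)
    intro y hy
    have hy' : y ∈ Set.uIcc (0:ℝ) ρ := by rwa [Set.uIcc_of_le hρ0]
    have hpos : 0 < Real.sqrt (1 - y ^ 2) := Real.sqrt_pos.2 (hy2 y hy')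
    apply mul_le_mul_of_nonneg_left _ (by positivity)
    rw [Real.exp_le_exp]
    have := ptwise_lower r y (cc ^ 2 / σ₁ ^ 2) (dd ^ 2 / σ₂ ^ 2) (cc * dd / (σ₁ * σ₂))
      hr1 hy.1 (le_trans hy.2 hρr) hA hA' hAM
    calc -(1 / (2 * (1 - r ^ 2))) *
          (cc ^ 2 / σ₁ ^ 2 + dd ^ 2 / σ₂ ^ 2 + 2 * r * |cc * dd| / (σ₁ * σ₂))
        = -(1 / (2 * (1 - r ^ 2))) * (cc ^ 2 / σ₁ ^ 2 + dd ^ 2 / σ₂ ^ 2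
            + 2 * r * |cc * dd / (σ₁ * σ₂)|) := by rw [habs]; ring
      _ ≤ -(1 / (2 * (1 - y ^ 2))) * (cc ^ 2 / σ₁ ^ 2
            - 2 * y * (cc * dd / (σ₁ * σ₂)) + dd ^ 2 / σ₂ ^ 2) := this
      _ = -(1 / (2 * (1 - y ^ 2))) * (cc ^ 2 / σ₁ ^ 2
            - 2 * y * cc * dd / (σ₁ * σ₂) + dd ^ 2 / σ₂ ^ 2) := by ring
  · rw [← hconst]
    apply intervalIntegral.integral_mono_on hρ0
      (hcF.intervalIntegrable) ((hcK _).intervalIntegrable)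
    intro y hy
    have hy' : y ∈ Set.uIcc (0:ℝ) ρ := by rwa [Set.uIcc_of_le hρ0]
    have hpos : 0 < Real.sqrt (1 - y ^ 2) := Real.sqrt_pos.2 (hy2 y hy')
    apply mul_le_mul_of_nonneg_left _ (by positivity)
    rw [Real.exp_le_exp]
    have := ptwise_upper r y (cc ^ 2 / σ₁ ^ 2) (dd ^ 2 / σ₂ ^ 2) (cc * dd / (σ₁ * σ₂))
      hr1 hy.1 (le_trans hy.2 hρr) hA hA'
    calc -(1 / (2 * (1 - y ^ 2))) * (cc ^ 2 / σ₁ ^ 2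
            - 2 * y * cc * dd / (σ₁ * σ₂) + dd ^ 2 / σ₂ ^ 2)
        = -(1 / (2 * (1 - y ^ 2))) * (cc ^ 2 / σ₁ ^ 2
            - 2 * y * (cc * dd / (σ₁ * σ₂)) + dd ^ 2 / σ₂ ^ 2) := by ring
      _ ≤ -(1 / 2) * (cc ^ 2 / σ₁ ^ 2 + dd ^ 2 / σ₂ ^ 2)
            + (r / (1 - r ^ 2)) * |cc * dd / (σ₁ * σ₂)| := this
      _ = -(1 / 2) * (cc ^ 2 / σ₁ ^ 2 + dd ^ 2 / σ₂ ^ 2)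
            + (r / (1 - r ^ 2)) * |cc * dd| / (σ₁ * σ₂) := by rw [habs]; ring


/-- Sandwich bounds on the covariance `I(ρ)` of two zero-mean jointly Gaussian
variables (standard deviations `σ₁, σ₂`, correlation `ρ` with `0 ≤ ρ ≤ r < 1`) after
non-uniform quantization with thresholds `cᵢ, dⱼ` and nonnegative level increments `Δᵢ, Δ'ⱼ`. -/
theorem stmt_8 (σ₁ σ₂ r ρ : ℝ) (n₁ n₂ : ℕ) (c d Δ Δ' : ℕ → ℝ)
    (hσ₁ : 0 < σ₁) (hσ₂ : 0 < σ₂) (hr0 : 0 < r) (hr1 : r < 1)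
    (hρ0 : 0 ≤ ρ) (hρr : ρ ≤ r) (hn₁ : 0 < n₁) (hn₂ : 0 < n₂)
    (hΔ : ∀ i ∈ Finset.Icc 1 (n₁ - 1), 0 ≤ Δ i)
    (hΔ' : ∀ j ∈ Finset.Icc 1 (n₂ - 1), 0 ≤ Δ' j) :
    (Real.arcsin ρ / (2 * Real.pi)) *
        ∑ i ∈ Finset.Icc 1 (n₁ - 1), ∑ j ∈ Finset.Icc 1 (n₂ - 1),
          Δ i * Δ' j *
            Real.exp (-(1 / (2 * (1 - r ^ 2))) *
              ((c i) ^ 2 / σ₁ ^ 2 + (d j) ^ 2 / σ₂ ^ 2 +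
                2 * r * |c i * d j| / (σ₁ * σ₂))) ≤
      (∑ i ∈ Finset.Icc 1 (n₁ - 1), ∑ j ∈ Finset.Icc 1 (n₂ - 1),
        Δ i * Δ' j *
          ∫ y in (0 : ℝ)..ρ, (2 * Real.pi * Real.sqrt (1 - y ^ 2))⁻¹ *
            Real.exp (-(1 / (2 * (1 - y ^ 2))) *
              ((c i) ^ 2 / σ₁ ^ 2 - 2 * y * (c i) * (d j) / (σ₁ * σ₂) +
                (d j) ^ 2 / σ₂ ^ 2))) ∧
    (∑ i ∈ Finset.Icc 1 (n₁ - 1), ∑ j ∈ Finset.Icc 1 (n₂ - 1),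
        Δ i * Δ' j *
          ∫ y in (0 : ℝ)..ρ, (2 * Real.pi * Real.sqrt (1 - y ^ 2))⁻¹ *
            Real.exp (-(1 / (2 * (1 - y ^ 2))) *
              ((c i) ^ 2 / σ₁ ^ 2 - 2 * y * (c i) * (d j) / (σ₁ * σ₂) +
                (d j) ^ 2 / σ₂ ^ 2))) ≤
      (Real.arcsin ρ / (2 * Real.pi)) *
        ∑ i ∈ Finset.Icc 1 (n₁ - 1), ∑ j ∈ Finset.Icc 1 (n₂ - 1),
          Δ i * Δ' j *
            Real.exp (-(1 / 2) * ((c i) ^ 2 / σ₁ ^ 2 + (d j) ^ 2 / σ₂ ^ 2) +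
              (r / (1 - r ^ 2)) * |c i * d j| / (σ₁ * σ₂)) := by
  constructor
  · rw [Finset.mul_sum]
    apply Finset.sum_le_sum
    intro i hi
    rw [Finset.mul_sum]
    apply Finset.sum_le_sum
    intro j hj
    have h := (pair_bound σ₁ σ₂ r ρ (c i) (d j) hσ₁ hσ₂ hr0 hr1 hρ0 hρr).1
    have hΔΔ : 0 ≤ Δ i * Δ' j := mul_nonneg (hΔ i hi) (hΔ' j hj)
    calc Real.arcsin ρ / (2 * Real.pi) * (Δ i * Δ' j *
            Real.exp (-(1 / (2 * (1 - r ^ 2))) *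
              ((c i) ^ 2 / σ₁ ^ 2 + (d j) ^ 2 / σ₂ ^ 2 +
                2 * r * |c i * d j| / (σ₁ * σ₂))))
        = Δ i * Δ' j * (Real.arcsin ρ / (2 * Real.pi) *
            Real.exp (-(1 / (2 * (1 - r ^ 2))) *
              ((c i) ^ 2 / σ₁ ^ 2 + (d j) ^ 2 / σ₂ ^ 2 +
                2 * r * |c i * d j| / (σ₁ * σ₂)))) := by ring
      _ ≤ _ := mul_le_mul_of_nonneg_left h hΔΔ
  · rw [Finset.mul_sum]
    apply Finset.sum_le_sum
    intro i hi
    rw [Finset.mul_sum]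
    apply Finset.sum_le_sum
    intro j hj
    have h := (pair_bound σ₁ σ₂ r ρ (c i) (d j) hσ₁ hσ₂ hr0 hr1 hρ0 hρr).2
    have hΔΔ : 0 ≤ Δ i * Δ' j := mul_nonneg (hΔ i hi) (hΔ' j hj)
    calc Δ i * Δ' j * (∫ y in (0 : ℝ)..ρ, (2 * Real.pi * Real.sqrt (1 - y ^ 2))⁻¹ *
            Real.exp (-(1 / (2 * (1 - y ^ 2))) *
              ((c i) ^ 2 / σ₁ ^ 2 - 2 * y * (c i) * (d j) / (σ₁ * σ₂) +
                (d j) ^ 2 / σ₂ ^ 2)))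
        ≤ Δ i * Δ' j * (Real.arcsin ρ / (2 * Real.pi) *
            Real.exp (-(1 / 2) * ((c i) ^ 2 / σ₁ ^ 2 + (d j) ^ 2 / σ₂ ^ 2) +
              (r / (1 - r ^ 2)) * |c i * d j| / (σ₁ * σ₂))) :=
          mul_le_mul_of_nonneg_left h hΔΔ
      _ = Real.arcsin ρ / (2 * Real.pi) * (Δ i * Δ' j *
            Real.exp (-(1 / 2) * ((c i) ^ 2 / σ₁ ^ 2 + (d j) ^ 2 / σ₂ ^ 2) +
              (r / (1 - r ^ 2)) * |c i * d j| / (σ₁ * σ₂))) := by ring
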